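/- Let v be a viscosity supersolution of the HJB equation max_{q∈[0,1]} { p[q(1+η)-η]φ_x + φ_s + φ_w + λ(w)∫₀^{x/q} v(s, x-qy, 0) dG(y) - λ(w) v(s,x,w) } ≤ 0 on a domain 𝒟, with boundary conditions v ≥ 1 on {t = T} and on {x ≥ ηp(T-t)}. Define φ^{ς,θ}(t,y,v) := ς/(t+1) + θ(T-t)/t for constants ς, θ > 0. Then v + φ^{ς,θ} is a strict viscosity supersolution: for every test function φ ∈ C¹ touching v + φ^{ς,θ} from below at an interior point, the HJB operator evaluated at that point is at most -ς/(T+1)². -/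

import Mathlib

open MeasureTheory Real Set

/-- The HJB operator `ℒ[u,φ](s,x,w)` with claim-size distribution `ν` (the measure `dG`). -/
noncomputable def hjbOp (p η : ℝ) (lam : ℝ → ℝ) (ν : MeasureTheory.Measure ℝ)
    (u φ : ℝ × ℝ × ℝ → ℝ) (z : ℝ × ℝ × ℝ) : ℝ :=
  ⨆ q : Set.Icc (0:ℝ) 1,
    (p * ((q : ℝ) * (1 + η) - η) * fderiv ℝ φ z (0, 1, 0) +
      fderiv ℝ φ z (1, 0, 0) + fderiv ℝ φ z (0, 0, 1) +
      lam z.2.2 * ∫ y in Set.Ioc (0:ℝ) (z.2.1 / (q : ℝ)), u (z.1, z.2.1 - (q : ℝ) * y, 0) ∂ν -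
      lam z.2.2 * u z)

/-- The open domain `𝒟`. -/
def openDomain (T η p : ℝ) : Set (ℝ × ℝ × ℝ) :=
  {z | 0 < z.1 ∧ z.1 < T ∧ 0 < z.2.1 ∧ z.2.1 < η * p * (T - z.1) ∧ 0 < z.2.2 ∧ z.2.2 < z.1}

noncomputable def smoothFloor (a b t : ℝ) : ℝ :=
  a + (t - a) * Real.smoothTransition ((t - a) / (b - a))

lemma smoothFloor_contDiff (a b : ℝ) (hab : a < b) : ContDiff ℝ 1 (smoothFloor a b) := by
  unfold smoothFloor
  have h1 : ContDiff ℝ 1 (fun t : ℝ => (t - a) / (b - a)) := by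
    apply ContDiff.div_const; exact (contDiff_id.sub contDiff_const)
  exact contDiff_const.add ((contDiff_id.sub contDiff_const).mul
    (Real.smoothTransition.contDiff.comp h1))

lemma smoothFloor_ge (a b t : ℝ) (hab : a < b) : a ≤ smoothFloor a b t := by
  unfold smoothFloor
  rcases le_total t a with h | h
  · have : Real.smoothTransition ((t - a) / (b - a)) = 0 :=
      Real.smoothTransition.zero_of_nonpos (by
        apply div_nonpos_of_nonpos_of_nonneg <;> linarith)
    rw [this]; ring_nf; nlinarith
  · nlinarith [Real.smoothTransition.nonneg ((t - a) / (b - a))]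

lemma smoothFloor_le (a b t : ℝ) (hab : a < b) (h : a ≤ t) : smoothFloor a b t ≤ t := by
  unfold smoothFloor
  nlinarith [Real.smoothTransition.le_one ((t - a) / (b - a))]

lemma smoothFloor_eq (a b t : ℝ) (hab : a < b) (h : b ≤ t) : smoothFloor a b t = t := by
  unfold smoothFloor
  have : Real.smoothTransition ((t - a) / (b - a)) = 1 :=
    Real.smoothTransition.one_of_one_le (by rw [le_div_iff₀ (by linarith)]; linarith)
  rw [this]; ring

noncomputable def fPert (T ς θ s : ℝ) : ℝ := ς / (s + 1) + θ * (T - s) / s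

lemma fPert_eq (T ς θ s : ℝ) (hs : s ≠ 0) :
    fPert T ς θ s = ς / (s + 1) + θ * T / s - θ := by
  unfold fPert; field_simp; ring

lemma fPert_anti (T ς θ : ℝ) (hς : 0 < ς) (hθ : 0 < θ) (hT : 0 < T)
    {s t : ℝ} (hs : 0 < s) (hst : s ≤ t) : fPert T ς θ t ≤ fPert T ς θ s := by
  rw [fPert_eq _ _ _ _ (ne_of_gt (lt_of_lt_of_le hs hst)), fPert_eq _ _ _ _ (ne_of_gt hs)]
  have h1 : ς / (t + 1) ≤ ς / (s + 1) :=
    div_le_div_of_nonneg_left hς.le (by linarith) (by linarith)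
  have h2 : θ * T / t ≤ θ * T / s :=
    div_le_div_of_nonneg_left (by positivity) hs hst
  linarith

lemma fPert_pos (T ς θ s : ℝ) (hς : 0 < ς) (hθ : 0 < θ) (hs : 0 < s) (hsT : s < T) :
    0 < fPert T ς θ s := by
  exact add_pos (div_pos hς (by linarith)) (div_pos (by nlinarith) hs)

lemma fPert_contDiffOn (T ς θ : ℝ) : ContDiffOn ℝ 1 (fPert T ς θ) (Set.Ioi 0) := by
  unfold fPert
  apply ContDiffOn.add
  · exact contDiffOn_const.div (contDiffOn_id.add contDiffOn_const)
      (fun s hs => by have := Set.mem_Ioi.mp hs; intro h; linarith)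
  · exact (contDiffOn_const.mul (contDiffOn_const.sub contDiffOn_id)).div contDiffOn_id
      (fun s hs => ne_of_gt hs)

lemma fPert_hasDerivAt (T ς θ t : ℝ) (ht : 0 < t) :
    HasDerivAt (fPert T ς θ) (-(ς / (t + 1) ^ 2) - θ * T / t ^ 2) t := by
  have h1 : HasDerivAt (fun s : ℝ => s + 1) 1 t := (hasDerivAt_id t).add_const 1
  have h2 : HasDerivAt (fun s : ℝ => (s + 1)⁻¹) (-1 / (t + 1) ^ 2) t :=
    h1.inv (by linarith)
  have h3 : HasDerivAt (fun s : ℝ => s⁻¹) (-(t ^ 2)⁻¹) t := hasDerivAt_inv (ne_of_gt ht)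
  have h4 : HasDerivAt (fun s : ℝ => ς * (s + 1)⁻¹ + θ * T * s⁻¹ - θ)
      (ς * (-1 / (t + 1) ^ 2) + θ * T * (-(t ^ 2)⁻¹)) t :=
    ((h2.const_mul ς).add (h3.const_mul (θ * T))).sub_const θ
  have heq : fPert T ς θ =ᶠ[nhds t] (fun s : ℝ => ς * (s + 1)⁻¹ + θ * T * s⁻¹ - θ) := by
    filter_upwards [IsOpen.mem_nhds isOpen_Ioi (Set.mem_Ioi.mpr ht)] with s hs
    rw [fPert_eq _ _ _ _ (ne_of_gt hs)]
    rw [div_eq_mul_inv, div_eq_mul_inv]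
  have := h4.congr_of_eventuallyEq heq
  refine this.congr_deriv ?_
  ring

lemma smoothFloor_eq_left (a b t : ℝ) (hab : a < b) (h : t ≤ a) : smoothFloor a b t = a := by
  unfold smoothFloor
  rw [Real.smoothTransition.zero_of_nonpos
    (div_nonpos_of_nonpos_of_nonneg (by linarith) (by linarith))]
  ring

set_option maxHeartbeats 2000000 in
theorem strict_supersolution_perturbation
    (T p η ς θ : ℝ) (hT : 0 < T) (hp : 0 < p) (hη : 0 < η) (hς : 0 < ς) (hθ : 0 < θ)
    (lam : ℝ → ℝ) (hlam : ContinuousOn lam (Set.Icc 0 T))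
    (hlampos : ∀ t ∈ Set.Icc (0:ℝ) T, 0 < lam t)
    (ν : MeasureTheory.Measure ℝ) [MeasureTheory.IsProbabilityMeasure ν]
    (v : ℝ × ℝ × ℝ → ℝ) (hvcont : Continuous v)
    -- v is a viscosity supersolution on 𝒟:
    (hsuper : ∀ z ∈ openDomain T η p, ∀ φ : ℝ × ℝ × ℝ → ℝ, ContDiff ℝ 1 φ →
      v z = φ z → (∀ z' ∈ openDomain T η p, φ z' ≤ v z') →
      hjbOp p η lam ν v φ z ≤ 0)
    -- boundary conditions v ≥ 1 on {t = T} and on {x ≥ ηp(T-t)}: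
    (hbT : ∀ z : ℝ × ℝ × ℝ, z.1 = T → 1 ≤ v z)
    (hbx : ∀ z : ℝ × ℝ × ℝ, η * p * (T - z.1) ≤ z.2.1 → 1 ≤ v z) :
    -- then v + φ^{ς,θ} is a strict viscosity supersolution:
    ∀ z ∈ openDomain T η p, ∀ φ : ℝ × ℝ × ℝ → ℝ, ContDiff ℝ 1 φ →
      v z + (ς / (z.1 + 1) + θ * (T - z.1) / z.1) = φ z →
      (∀ z' ∈ openDomain T η p, φ z' ≤ v z' + (ς / (z'.1 + 1) + θ * (T - z'.1) / z'.1)) →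
      hjbOp p η lam ν (fun z' => v z' + (ς / (z'.1 + 1) + θ * (T - z'.1) / z'.1)) φ z
        ≤ -ς / (T + 1) ^ 2 := by
  intro z hzmem φ hφ heq hle
  obtain ⟨t, x, w⟩ := z
  have hz := hzmem
  simp only [openDomain, Set.mem_setOf_eq] at hz
  obtain ⟨ht0, htT, hx0, hxb, hw0, hwt⟩ := hz
  -- the perturbation equals fPert of the first coordinate
  have hψ : ∀ s : ℝ, ς / (s + 1) + θ * (T - s) / s = fPert T ς θ s := fun s => rfl
  -- compact box containing the domain
  have hKcomp : IsCompact (Set.Icc ((0:ℝ),(0:ℝ),(0:ℝ)) (T, η*p*T, T)) := isCompact_Icc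
  have hsub : openDomain T η p ⊆ Set.Icc ((0:ℝ),(0:ℝ),(0:ℝ)) (T, η*p*T, T) := by
    rintro ⟨t',x',w'⟩ ⟨h1,h2,h3,h4,h5,h6⟩
    simp only [Set.mem_Icc, Prod.mk_le_mk]
    refine ⟨⟨h1.le, h3.le, h5.le⟩, ⟨h2.le, ?_, by linarith⟩⟩
    nlinarith
  obtain ⟨M, hM⟩ := hKcomp.exists_bound_of_continuousOn (hφ.continuous.sub hvcont).continuousOn
  have hM' : ∀ z' ∈ openDomain T η p, φ z' - v z' ≤ M := by
    intro z' hz'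
    calc φ z' - v z' ≤ ‖φ z' - v z'‖ := le_abs_self _
    _ ≤ M := by simpa using hM z' (hsub hz')
  have hM0 : 0 ≤ M := le_trans (norm_nonneg _) (hM _ (hsub hzmem))
  -- choose a, b
  set a : ℝ := min (t/2) (θ*T/(M+θ)) with ha_def
  have ha0 : 0 < a := lt_min (by linarith) (by positivity)
  have hat : a < t := lt_of_le_of_lt (min_le_left _ _) (by linarith)
  set b : ℝ := (a + t)/2 with hb_def
  have hab : a < b := by simp only [hb_def]; linarith
  have hbt : b < t := by simp only [hb_def]; linarith
  have hfa : M ≤ fPert T ς θ a := by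
    rw [fPert_eq _ _ _ _ (ne_of_gt ha0)]
    have h1 : a ≤ θ*T/(M+θ) := min_le_right _ _
    have h2 : M + θ ≤ θ*T/a := by
      rw [le_div_iff₀ ha0]
      calc (M + θ) * a ≤ (M + θ) * (θ*T/(M+θ)) := by
            apply mul_le_mul_of_nonneg_left h1 (by linarith)
      _ = θ*T := by field_simp
    have h3 : 0 ≤ ς / (a + 1) := by positivity
    linarith
  -- the modified perturbation g
  set g : ℝ → ℝ := fun s => fPert T ς θ (smoothFloor a b s) with hg_def
  have hμpos : ∀ s : ℝ, 0 < smoothFloor a b s := fun s => lt_of_lt_of_le ha0 (smoothFloor_ge a b s hab)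
  have hg_cd : ContDiff ℝ 1 g :=
    (fPert_contDiffOn T ς θ).comp_contDiff (smoothFloor_contDiff a b hab)
      (fun s => Set.mem_Ioi.mpr (hμpos s))
  set φ' : ℝ × ℝ × ℝ → ℝ := fun z' => φ z' - g z'.1 with hφ'_def
  have hφ'_cd : ContDiff ℝ 1 φ' := hφ.sub (hg_cd.comp contDiff_fst)
  have hgt : g t = fPert T ς θ t := by
    simp only [hg_def, smoothFloor_eq a b t hab hbt.le]
  have htouch' : v (t,x,w) = φ' (t,x,w) := by
    simp only [hφ'_def, hgt]
    rw [← heq, hψ]; ring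
  have hle' : ∀ z' ∈ openDomain T η p, φ' z' ≤ v z' := by
    intro z' hz'
    obtain ⟨h1,h2,h3,h4,h5,h6⟩ := hz'
    simp only [hφ'_def]
    rcases le_total a z'.1 with hcase | hcase
    · have hmu : fPert T ς θ z'.1 ≤ g z'.1 := by
        simp only [hg_def]
        exact fPert_anti T ς θ hς hθ hT (hμpos z'.1) (smoothFloor_le a b z'.1 hab hcase)
      have := hle z' ⟨h1,h2,h3,h4,h5,h6⟩
      rw [hψ] at this
      linarith
    · have hmu : g z'.1 = fPert T ς θ a := by
        simp only [hg_def, smoothFloor_eq_left a b z'.1 hab hcase]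
      rw [hmu]
      have := hM' z' ⟨h1,h2,h3,h4,h5,h6⟩
      linarith
  -- derivative of g at t
  set d : ℝ := -(ς / (t + 1) ^ 2) - θ * T / t ^ 2 with hd_def
  have hgd : HasDerivAt g d t := by
    have hev : g =ᶠ[nhds t] fPert T ς θ := by
      filter_upwards [IsOpen.mem_nhds isOpen_Ioi (Set.mem_Ioi.mpr hbt)] with s hs
      simp only [hg_def, smoothFloor_eq a b s hab (le_of_lt hs)]
    exact (fPert_hasDerivAt T ς θ t ht0).congr_of_eventuallyEq hev
  set L : (ℝ × ℝ × ℝ) →L[ℝ] ℝ :=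
    (ContinuousLinearMap.smulRight (1 : ℝ →L[ℝ] ℝ) d).comp
      (ContinuousLinearMap.fst ℝ ℝ (ℝ × ℝ)) with hL_def
  have hG : HasFDerivAt (fun z' : ℝ × ℝ × ℝ => g z'.1) L (t,x,w) :=
    (hgd.hasFDerivAt).comp (f := Prod.fst) (t,x,w) hasFDerivAt_fst
  have hL1 : L (1,0,0) = d := by
    simp [hL_def]
  have hL2 : L (0,1,0) = 0 := by simp [hL_def]
  have hL3 : L (0,0,1) = 0 := by simp [hL_def]
  have hφdiff := (hφ.differentiable one_ne_zero (t,x,w)).hasFDerivAt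
  have hfd : fderiv ℝ φ' (t,x,w) = fderiv ℝ φ (t,x,w) - L := by
    rw [hφ'_def]
    exact (hφdiff.sub hG).fderiv
  have hS : hjbOp p η lam ν v φ' (t,x,w) ≤ 0 :=
    hsuper (t,x,w) hzmem φ' hφ'_cd htouch' hle'
  -- bound for v on the x-slice
  have hvs : Continuous fun s : ℝ => v (t, s, 0) :=
    hvcont.comp (continuous_const.prodMk (continuous_id.prodMk continuous_const))
  obtain ⟨Cv, hCv⟩ := (isCompact_Icc : IsCompact (Set.Icc (0:ℝ) x)).exists_bound_of_continuousOn
    hvs.continuousOn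
  have hCv0 : 0 ≤ Cv := le_trans (norm_nonneg _) (hCv x ⟨hx0.le, le_refl x⟩)
  have hmem : ∀ q : ℝ, q ∈ Set.Icc (0:ℝ) 1 → ∀ y ∈ Set.Ioc (0:ℝ) (x/q),
      x - q*y ∈ Set.Icc (0:ℝ) x := by
    rintro q ⟨hq0, hq1⟩ y ⟨hy0, hyx⟩
    rcases eq_or_lt_of_le hq0 with rfl | hqpos
    · rw [div_zero] at hyx; linarith
    · have h1 : q * y ≤ x := by rwa [← le_div_iff₀' hqpos]
      constructor
      · linarith
      · linarith [mul_nonneg hq0 hy0.le]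
  have hInt : ∀ q : ℝ, MeasureTheory.IntegrableOn (fun y => v (t, x - q*y, 0))
      (Set.Ioc 0 (x/q)) ν := by
    intro q
    have hc : Continuous fun y : ℝ => v (t, x - q*y, 0) :=
      hvs.comp (continuous_const.sub (continuous_const.mul continuous_id))
    exact (hc.continuousOn.integrableOn_compact isCompact_Icc).mono_set Set.Ioc_subset_Icc_self
  have htr : ∀ s : Set ℝ, (ν s).toReal ≤ 1 := fun s => by
    simpa using ENNReal.toReal_mono (by simp) (prob_le_one (μ := ν) (s := s))
  have hIbound : ∀ q : ℝ, q ∈ Set.Icc (0:ℝ) 1 →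
      ‖∫ y in Set.Ioc (0:ℝ) (x/q), v (t, x - q*y, 0) ∂ν‖ ≤ Cv := by
    intro q hq
    calc ‖∫ y in Set.Ioc (0:ℝ) (x/q), v (t, x - q*y, 0) ∂ν‖
        ≤ Cv * (ν (Set.Ioc (0:ℝ) (x/q))).toReal :=
          norm_setIntegral_le_of_norm_le_const (measure_lt_top ν _)
            (fun y hy => hCv _ (hmem q hq y hy))
      _ ≤ Cv * 1 := mul_le_mul_of_nonneg_left (htr _) hCv0
      _ = Cv := mul_one Cv
  have hlamw : 0 < lam w := hlampos w ⟨hw0.le, by linarith⟩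
  have hft' : 0 < ς / (t + 1) + θ * (T - t) / t := fPert_pos T ς θ t hς hθ ht0 htT
  have hfd' : fderiv ℝ φ (t,x,w) = fderiv ℝ φ' (t,x,w) + L := by
    rw [hfd, sub_add_cancel]
  have hd_bound : d ≤ -ς / (T + 1) ^ 2 := by
    have h1 : ς/(T+1)^2 ≤ ς/(t+1)^2 :=
      div_le_div_of_nonneg_left hς.le (by positivity) (by nlinarith)
    have h2 : 0 ≤ θ*T/t^2 := by positivity
    rw [hd_def, neg_div]
    linarith
  haveI : Nonempty (Set.Icc (0:ℝ) 1) := ⟨⟨0, by norm_num⟩⟩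
  simp only [hjbOp] at hS ⊢
  apply ciSup_le
  intro q
  have hq0 : (0:ℝ) ≤ (q:ℝ) := q.2.1
  have hq1 : (q:ℝ) ≤ 1 := q.2.2
  have hsplit : ∫ y in Set.Ioc (0:ℝ) (x/(q:ℝ)),
        (v (t, x - (q:ℝ)*y, 0) + (ς / (t + 1) + θ * (T - t) / t)) ∂ν
      = (∫ y in Set.Ioc (0:ℝ) (x/(q:ℝ)), v (t, x - (q:ℝ)*y, 0) ∂ν)
        + (ν (Set.Ioc (0:ℝ) (x/(q:ℝ)))).toReal * (ς / (t + 1) + θ * (T - t) / t) := by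
    rw [MeasureTheory.integral_add (hInt (q:ℝ))
      (MeasureTheory.integrableOn_const (measure_lt_top ν _).ne)]
    rw [MeasureTheory.setIntegral_const, smul_eq_mul, measureReal_def]
  have hbdd : BddAbove (Set.range (fun q : Set.Icc (0:ℝ) 1 =>
      p * ((q:ℝ)*(1+η) - η) * fderiv ℝ φ' (t,x,w) (0,1,0)
      + fderiv ℝ φ' (t,x,w) (1,0,0) + fderiv ℝ φ' (t,x,w) (0,0,1)
      + lam w * (∫ y in Set.Ioc (0:ℝ) (x/(q:ℝ)), v (t, x - (q:ℝ)*y, 0) ∂ν)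
      - lam w * v (t,x,w))) := by
    refine ⟨p*(1+η)*|fderiv ℝ φ' (t,x,w) (0,1,0)| + fderiv ℝ φ' (t,x,w) (1,0,0)
      + fderiv ℝ φ' (t,x,w) (0,0,1) + lam w * Cv + lam w * |v (t,x,w)|, ?_⟩
    rintro r ⟨q', rfl⟩
    try dsimp only
    have hq'0 : (0:ℝ) ≤ (q':ℝ) := q'.2.1
    have hq'1 : (q':ℝ) ≤ 1 := q'.2.2
    have hI := hIbound (q':ℝ) ⟨hq'0, hq'1⟩
    set D := fderiv ℝ φ' (t,x,w) (0,1,0) with hD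
    have h1 : p * ((q':ℝ)*(1+η) - η) * D ≤ p*(1+η)*|D| := by
      have hc1 : (q':ℝ)*(1+η) - η ≤ 1+η := by nlinarith
      have hc2 : -η ≤ (q':ℝ)*(1+η) - η := by nlinarith
      rcases abs_cases D with ⟨h, h'⟩ | ⟨h, h'⟩
      · calc p * ((q':ℝ)*(1+η) - η) * D = p * (((q':ℝ)*(1+η) - η) * D) := by ring
          _ ≤ p * ((1+η) * D) :=
              mul_le_mul_of_nonneg_left (mul_le_mul_of_nonneg_right hc1 h') hp.le
          _ = p*(1+η)*|D| := by rw [h]; ring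
      · calc p * ((q':ℝ)*(1+η) - η) * D = p * (((q':ℝ)*(1+η) - η) * D) := by ring
          _ ≤ p * (-η * D) :=
              mul_le_mul_of_nonneg_left (mul_le_mul_of_nonpos_right hc2 h'.le) hp.le
          _ ≤ p*(1+η)*|D| := by
              rw [h]
              nlinarith [mul_nonneg hp.le (neg_nonneg.mpr h'.le)]
    have h2 : lam w * (∫ y in Set.Ioc (0:ℝ) (x/(q':ℝ)), v (t, x - (q':ℝ)*y, 0) ∂ν)
        ≤ lam w * Cv :=
      mul_le_mul_of_nonneg_left (le_trans (le_abs_self _) hI) hlamw.le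
    have h3 : - (lam w * v (t,x,w)) ≤ lam w * |v (t,x,w)| := by
      have := neg_abs_le (v (t,x,w))
      nlinarith
    linarith
  have hOldq : p * ((q:ℝ)*(1+η) - η) * fderiv ℝ φ' (t,x,w) (0,1,0)
      + fderiv ℝ φ' (t,x,w) (1,0,0) + fderiv ℝ φ' (t,x,w) (0,0,1)
      + lam w * (∫ y in Set.Ioc (0:ℝ) (x/(q:ℝ)), v (t, x - (q:ℝ)*y, 0) ∂ν)
      - lam w * v (t,x,w) ≤ 0 := le_trans (le_ciSup hbdd q) hS
  have hcorr : lam w * ((ν (Set.Ioc (0:ℝ) (x/(q:ℝ)))).toReal * (ς / (t + 1) + θ * (T - t) / t))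
      ≤ lam w * (ς / (t + 1) + θ * (T - t) / t) := by
    have h5 := mul_le_mul_of_nonneg_right (htr (Set.Ioc (0:ℝ) (x/(q:ℝ)))) hft'.le
    rw [one_mul] at h5
    exact mul_le_mul_of_nonneg_left h5 hlamw.le
  try dsimp only
  rw [hfd']
  simp only [ContinuousLinearMap.add_apply, hL1, hL2, hL3, add_zero]
  rw [hsplit]
  linarith [hOldq, hcorr, hd_bound]
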